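/- Let x̂ ∈ S¹ and suppose the normal Lyapunov exponent λ := lim_{n→∞} (1/n) Σ_{k=0}^{n-1} ln|1 + cos(2π·3^k x̂)/32| exists and is negative. Then there exists δ > 0 such that for all z ∈ [0, δ], the forward orbit of (x̂, z) under f converges to the boundary circle S¹ × {0}, i.e., f_z^n(x̂, z) → 0 as n → ∞. -/

import Mathlib

open Real Set Filter Topology

/-- The Kan map on the real cover of the annulus: `x ↦ 3x`,
`z ↦ z + cos(2πx)(z/32)(1-z)` (the `z`-dynamics only sees `x mod 1`). -/
noncomputable def kanCover (p : ℝ × ℝ) : ℝ × ℝ :=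
  (3 * p.1, p.2 + Real.cos (2 * π * p.1) * (p.2 / 32) * (1 - p.2))

lemma kan_fst (x z : ℝ) (n : ℕ) : (kanCover^[n] (x, z)).1 = 3 ^ n * x := by
  induction n with
  | zero => simp
  | succ n ih =>
    rw [Function.iterate_succ_apply', kanCover]
    simp only [ih]
    ring

lemma kan_snd (x z : ℝ) (n : ℕ) :
    (kanCover^[n+1] (x, z)).2 =
      (kanCover^[n] (x, z)).2 *
        (1 + Real.cos (2 * π * (3 ^ n * x)) / 32 * (1 - (kanCover^[n] (x, z)).2)) := by
  rw [Function.iterate_succ_apply', kanCover]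
  simp only [kan_fst]
  ring

lemma mem_Icc_step (c z : ℝ) (hc : |c| ≤ 1) (hz : z ∈ Set.Icc (0:ℝ) 1) :
    z * (1 + c / 32 * (1 - z)) ∈ Set.Icc (0:ℝ) 1 := by
  obtain ⟨h0, h1⟩ := hz
  obtain ⟨hc1, hc2⟩ := abs_le.1 hc
  have hf : (0:ℝ) ≤ 1 + c / 32 * (1 - z) := by
    nlinarith [mul_nonneg (by linarith : (0:ℝ) ≤ c + 1) (by linarith : (0:ℝ) ≤ 1 - z)]
  constructor
  · exact mul_nonneg h0 hf
  · nlinarith [mul_nonneg (mul_nonneg (by linarith : (0:ℝ) ≤ 1 - c) h0) (by linarith : (0:ℝ) ≤ 1 - z),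
      mul_nonneg (by linarith : (0:ℝ) ≤ 1 - z) (by linarith : (0:ℝ) ≤ 32 - z)]

lemma kan_mem_Icc (x z : ℝ) (hz : z ∈ Set.Icc (0:ℝ) 1) (n : ℕ) :
    (kanCover^[n] (x, z)).2 ∈ Set.Icc (0:ℝ) 1 := by
  induction n with
  | zero => simpa using hz
  | succ n ih =>
    rw [kan_snd]
    exact mem_Icc_step _ _ (abs_cos_le_one _) ih

lemma geom_sum_bound' (q : ℝ) (h0 : 0 ≤ q) (h1 : q < 1) (n : ℕ) :
    ∑ k ∈ Finset.range n, q ^ k ≤ (1 - q)⁻¹ := by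
  rw [geom_sum_eq h1.ne n, div_le_iff_of_neg (by linarith : q - 1 < 0)]
  have hqn : 0 ≤ q ^ n := pow_nonneg h0 n
  have h1q : 0 < 1 - q := by linarith
  rw [show q - 1 = -(1 - q) by ring, mul_neg, inv_mul_cancel₀ (by linarith : (1:ℝ) - q ≠ 0)]
  linarith

/-- A point of the base circle with negative normal Lyapunov exponent has an
immediate stable manifold of positive length. -/
theorem stmt_9 (xhat lam : ℝ)
    (hlim : Tendsto (fun n : ℕ => (1 / n : ℝ) *
        ∑ k ∈ Finset.range n, Real.log |1 + Real.cos (2 * π * (3 ^ k * xhat)) / 32|)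
      atTop (𝓝 lam))
    (hneg : lam < 0) :
    ∃ δ > 0, ∀ z ∈ Set.Icc (0:ℝ) δ,
      Tendsto (fun n : ℕ => (kanCover^[n] (xhat, z)).2) atTop (𝓝 0) := by
  set a : ℕ → ℝ := fun k => 1 + Real.cos (2 * π * (3 ^ k * xhat)) / 32 with ha
  have ha_lb : ∀ k, (31:ℝ)/32 ≤ a k := fun k => by
    have := Real.neg_one_le_cos (2 * π * (3 ^ k * xhat))
    simp only [ha]; linarith
  have ha_ub : ∀ k, a k ≤ (33:ℝ)/32 := fun k => by
    have := Real.cos_le_one (2 * π * (3 ^ k * xhat))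
    simp only [ha]; linarith
  have ha_pos : ∀ k, 0 < a k := fun k => lt_of_lt_of_le (by norm_num) (ha_lb k)
  set q : ℝ := Real.exp (lam / 2) with hq
  have hq0 : 0 < q := Real.exp_pos _
  have hq1 : q < 1 := by rw [hq, Real.exp_lt_one_iff]; linarith
  -- eventually the averaged sums are below lam/2
  have hev : ∀ᶠ n : ℕ in atTop,
      (1 / n : ℝ) * ∑ k ∈ Finset.range n, Real.log |a k| < lam / 2 :=
    hlim.eventually (gt_mem_nhds (by linarith : lam < lam / 2))
  obtain ⟨N₀, hN₀⟩ := eventually_atTop.1 hev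
  set N : ℕ := max N₀ 1 with hN
  -- product bound for n ≥ N
  have hprod_big : ∀ n, N ≤ n → (∏ k ∈ Finset.range n, a k) ≤ q ^ n := by
    intro n hn
    have hn1 : 1 ≤ n := le_trans (le_max_right _ _) hn
    have h := hN₀ n (le_trans (le_max_left _ _) hn)
    have hnpos : (0:ℝ) < n := by exact_mod_cast hn1
    have hsum : ∑ k ∈ Finset.range n, Real.log |a k| ≤ n * (lam / 2) := by
      have := (div_lt_iff₀' hnpos).1 (by rwa [one_div, inv_mul_eq_div] at h)
      linarith
    have hsum' : ∑ k ∈ Finset.range n, Real.log (a k) ≤ n * (lam / 2) := by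
      have : ∀ k, Real.log |a k| = Real.log (a k) := fun k => by
        rw [abs_of_pos (ha_pos k)]
      simpa only [this] using hsum
    calc (∏ k ∈ Finset.range n, a k)
        = Real.exp (∑ k ∈ Finset.range n, Real.log (a k)) := by
          rw [Real.exp_sum]
          exact (Finset.prod_congr rfl fun k _ => (Real.exp_log (ha_pos k)).symm)
      _ ≤ Real.exp (n * (lam / 2)) := Real.exp_le_exp.2 hsum'
      _ = q ^ n := by rw [hq, ← Real.exp_nat_mul]
  set C : ℝ := (33 / 32) ^ N * (q⁻¹) ^ N with hC
  have hC1 : 1 ≤ C := by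
    have h1 : (1:ℝ) ≤ (33/32 : ℝ) ^ N := one_le_pow₀ (by norm_num)
    have h2 : (1:ℝ) ≤ (q⁻¹) ^ N := one_le_pow₀ ((one_le_inv₀ hq0).2 hq1.le)
    calc (1:ℝ) = 1 * 1 := by ring
      _ ≤ (33/32:ℝ) ^ N * (q⁻¹) ^ N := mul_le_mul h1 h2 (by norm_num) (le_trans (by norm_num) h1)
  have hC0 : 0 < C := lt_of_lt_of_le one_pos hC1
  have hprod : ∀ n, (∏ k ∈ Finset.range n, a k) ≤ C * q ^ n := by
    intro n
    rcases le_or_gt N n with hn | hn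
    · calc (∏ k ∈ Finset.range n, a k) ≤ q ^ n := hprod_big n hn
        _ = 1 * q ^ n := (one_mul _).symm
        _ ≤ C * q ^ n := by
          apply mul_le_mul_of_nonneg_right hC1 (by positivity)
    · have h1 : (∏ k ∈ Finset.range n, a k) ≤ (33/32 : ℝ) ^ n := by
        calc (∏ k ∈ Finset.range n, a k) ≤ ∏ k ∈ Finset.range n, (33/32 : ℝ) :=
            Finset.prod_le_prod (fun k _ => (ha_pos k).le) (fun k _ => ha_ub k)
          _ = (33/32 : ℝ) ^ n := by simp [div_pow]
      have h2 : (33/32 : ℝ) ^ n ≤ (33/32 : ℝ) ^ N :=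
        pow_le_pow_right₀ (by norm_num) hn.le
      have h3 : q ^ N ≤ q ^ n := pow_le_pow_of_le_one hq0.le hq1.le hn.le
      have h4 : (33/32 : ℝ) ^ N = C * q ^ N := by
        rw [hC, mul_assoc, ← mul_pow, inv_mul_cancel₀ hq0.ne', one_pow, mul_one]
      calc (∏ k ∈ Finset.range n, a k) ≤ (33/32 : ℝ) ^ N := le_trans h1 h2
        _ = C * q ^ N := h4
        _ ≤ C * q ^ n := mul_le_mul_of_nonneg_left h3 hC0.le
  -- choose δ
  have h1q : 0 < 1 - q := by linarith
  set δ : ℝ := min 1 (Real.log 2 * 31 * (1 - q) / (2 * C)) with hδ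
  have hδ0 : 0 < δ := by
    apply lt_min one_pos
    have hl2 : 0 < Real.log 2 := Real.log_pos (by norm_num)
    exact div_pos (mul_pos (mul_pos hl2 (by norm_num)) h1q) (by positivity)
  refine ⟨δ, hδ0, ?_⟩
  intro z hz
  obtain ⟨hz0, hzδ⟩ := hz
  have hz1 : z ∈ Set.Icc (0:ℝ) 1 := ⟨hz0, le_trans hzδ (min_le_left _ _)⟩
  set Z : ℕ → ℝ := fun n => (kanCover^[n] (xhat, z)).2 with hZ
  have hZmem : ∀ n, Z n ∈ Set.Icc (0:ℝ) 1 := kan_mem_Icc xhat z hz1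
  -- Lemma A: Z n ≤ z * ∏ a * exp (∑ Z k / 31)
  have lemA : ∀ n, Z n ≤ z * (∏ k ∈ Finset.range n, a k) *
      Real.exp (∑ k ∈ Finset.range n, Z k / 31) := by
    intro n
    induction n with
    | zero => simp [hZ]
    | succ n ih =>
      have hstep : Z (n + 1) = Z n * (1 + (a n - 1) * (1 - Z n)) := by
        simp only [hZ]
        rw [kan_snd]
        simp only [ha]
        ring_nf
      have hcos : |a n - 1| ≤ 1 / 32 := by
        have h1 := ha_lb n; have h2 := ha_ub n
        rw [abs_le]; constructor <;> linarith
      obtain ⟨hZn0, hZn1⟩ := hZmem n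
      have hT : 1 + (a n - 1) * (1 - Z n) ≤ a n * (1 + Z n / 31) := by
        obtain ⟨hc1, hc2⟩ := abs_le.1 hcos
        have := ha_lb n
        nlinarith
      have hT2 : a n * (1 + Z n / 31) ≤ a n * Real.exp (Z n / 31) := by
        apply mul_le_mul_of_nonneg_left _ (ha_pos n).le
        exact Real.add_one_le_exp _ |>.trans_eq' (by ring)
      have hfac0 : 0 ≤ a n * Real.exp (Z n / 31) := mul_nonneg (ha_pos n).le (Real.exp_nonneg _)
      calc Z (n + 1) = Z n * (1 + (a n - 1) * (1 - Z n)) := hstep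
        _ ≤ Z n * (a n * Real.exp (Z n / 31)) :=
            mul_le_mul_of_nonneg_left (hT.trans hT2) hZn0
        _ ≤ (z * (∏ k ∈ Finset.range n, a k) *
              Real.exp (∑ k ∈ Finset.range n, Z k / 31)) * (a n * Real.exp (Z n / 31)) :=
            mul_le_mul_of_nonneg_right ih hfac0
        _ = z * (∏ k ∈ Finset.range (n+1), a k) *
              Real.exp (∑ k ∈ Finset.range (n+1), Z k / 31) := by
            rw [Finset.prod_range_succ, Finset.sum_range_succ, Real.exp_add]
            ring
  -- Lemma B: Z n ≤ 2 * C * δ * q ^ n, by strong induction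
  have hδle : 2 * C * δ / (31 * (1 - q)) ≤ Real.log 2 := by
    have hδ2 : δ ≤ Real.log 2 * 31 * (1 - q) / (2 * C) := min_le_right _ _
    rw [div_le_iff₀ (by nlinarith : (0:ℝ) < 31 * (1 - q))]
    calc 2 * C * δ ≤ 2 * C * (Real.log 2 * 31 * (1 - q) / (2 * C)) := by
          apply mul_le_mul_of_nonneg_left hδ2 (by positivity)
      _ = Real.log 2 * (31 * (1 - q)) := by field_simp
  have lemB : ∀ n, Z n ≤ 2 * C * δ * q ^ n := by
    intro n
    induction n using Nat.strong_induction_on with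
    | _ n ih =>
      have hsum : ∑ k ∈ Finset.range n, Z k / 31 ≤ Real.log 2 := by
        calc ∑ k ∈ Finset.range n, Z k / 31
            ≤ ∑ k ∈ Finset.range n, 2 * C * δ * q ^ k / 31 := by
              apply Finset.sum_le_sum
              intro k hk
              exact div_le_div_of_nonneg_right (ih k (Finset.mem_range.1 hk)) (by norm_num) |>.trans_eq (by ring_nf)
          _ = (2 * C * δ / 31) * ∑ k ∈ Finset.range n, q ^ k := by
              rw [Finset.mul_sum]; apply Finset.sum_congr rfl; intro k _; ring
          _ ≤ (2 * C * δ / 31) * (1 - q)⁻¹ := by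
              apply mul_le_mul_of_nonneg_left (geom_sum_bound' q hq0.le hq1 n) (div_nonneg (mul_nonneg (mul_nonneg (by norm_num) hC0.le) hδ0.le) (by norm_num))
          _ = 2 * C * δ / (31 * (1 - q)) := by field_simp
          _ ≤ Real.log 2 := hδle
      have hexp : Real.exp (∑ k ∈ Finset.range n, Z k / 31) ≤ 2 := by
        calc Real.exp (∑ k ∈ Finset.range n, Z k / 31)
            ≤ Real.exp (Real.log 2) := Real.exp_le_exp.2 hsum
          _ = 2 := Real.exp_log (by norm_num)
      calc Z n ≤ z * (∏ k ∈ Finset.range n, a k) *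
            Real.exp (∑ k ∈ Finset.range n, Z k / 31) := lemA n
        _ ≤ δ * (C * q ^ n) * 2 := by
            apply mul_le_mul
            · apply mul_le_mul hzδ (hprod n)
                (Finset.prod_nonneg fun k _ => (ha_pos k).le) hδ0.le
            · exact hexp
            · positivity
            · exact mul_nonneg hδ0.le (mul_nonneg hC0.le (pow_nonneg hq0.le n))
        _ = 2 * C * δ * q ^ n := by ring
  -- conclude by squeeze
  have hlim0 : Tendsto (fun n : ℕ => 2 * C * δ * q ^ n) atTop (𝓝 0) := by
    have := (tendsto_pow_atTop_nhds_zero_of_lt_one hq0.le hq1).const_mul (2 * C * δ)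
    simpa using this
  exact squeeze_zero (fun n => (hZmem n).1) lemB hlim0
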